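/- If a metric space (X, d) satisfies the SRA_k(ε, α) condition for some k ∈ ℕ, ε > 0, α > 0, then (X, d) is not line-fitting. -/

import Mathlib

/-- A function `d : X → X → ℝ` is a metric. -/
def IsMetric {X : Type*} (d : X → X → ℝ) : Prop :=
  (∀ x y, 0 ≤ d x y) ∧ (∀ x y, d x y = 0 ↔ x = y) ∧ (∀ x y, d x y = d y x) ∧
    (∀ x y z, d x z ≤ d x y + d y z)

/-- The `α`-small rough angle condition for `(k, ε)`-equally-spaced points:
for every `k` points `x 0, …, x (k-1)` whose consecutive distances satisfy
`max ≤ (1+ε)·min`, the sum of consecutive distances is at least `(1+α)` times the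
distance of the endpoints. -/
def SRA (X : Type*) [MetricSpace X] (k : ℕ) (ε α : ℝ) : Prop :=
  ∀ x : ℕ → X,
    (∀ i, i + 1 < k → ∀ j, j + 1 < k →
      dist (x i) (x (i + 1)) ≤ (1 + ε) * dist (x j) (x (j + 1))) →
    (1 + α) * dist (x 0) (x (k - 1)) ≤ ∑ i ∈ Finset.range (k - 1), dist (x i) (x (i + 1))

/-- `(X, d)` is line-fitting: for every `n ≥ 1` there is a metric `D` on `X ⊔ [0,1]`
restricting to the Euclidean metric on `[0,1]`, restricting to `c·d` on `X` for some
`c > 0`, and such that every point of `[0,1]` is within `D`-distance `1/n` of `X`. -/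
def LineFitting (X : Type*) [MetricSpace X] : Prop :=
  ∀ n : ℕ, 0 < n →
    ∃ (D : (X ⊕ ↥unitInterval) → (X ⊕ ↥unitInterval) → ℝ) (c : ℝ), 0 < c ∧
      IsMetric D ∧
      (∀ s u : ↥unitInterval, D (Sum.inr s) (Sum.inr u) = |(s : ℝ) - (u : ℝ)|) ∧
      (∀ a b : X, D (Sum.inl a) (Sum.inl b) = c * dist a b) ∧
      (∀ u : ↥unitInterval, ∃ a : X, D (Sum.inr u) (Sum.inl a) < 1 / n)

/-- If a metric space `(X, d)` satisfies the `SRA_k(ε, α)` condition for some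
`k ≥ 2`, `ε > 0`, `α > 0`, then `(X, d)` is not line-fitting. -/
theorem not_lineFitting_of_SRA (X : Type*) [MetricSpace X] (k : ℕ) (hk : 2 ≤ k)
    (ε α : ℝ) (hε : 0 < ε) (hα : 0 < α) (hSRA : SRA X k ε α) :
    ¬ LineFitting X := by
  intro hLF
  have hm1 : 1 ≤ k - 1 := by omega
  set m : ℕ := k - 1 with hm
  set mR : ℝ := (m : ℝ) with hmR
  have hmR1 : (1:ℝ) ≤ mR := by rw [hmR]; exact_mod_cast hm1
  have hmR0 : (0:ℝ) < mR := by linarith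
  set s : ℝ := 1 / mR with hs
  have hs0 : 0 < s := by positivity
  obtain ⟨n, hn⟩ := exists_nat_gt (max (2*(2+ε)*mR/ε) ((2*mR+2*(1+α))/α))
  have hnA : 2*(2+ε)*mR/ε < (n:ℝ) := lt_of_le_of_lt (le_max_left _ _) hn
  have hnB : (2*mR+2*(1+α))/α < (n:ℝ) := lt_of_le_of_lt (le_max_right _ _) hn
  have hnR : (0:ℝ) < n := lt_trans (by positivity) hnA
  have hn0 : 0 < n := by exact_mod_cast hnR
  obtain ⟨D, c, hc, ⟨hDpos, hDzero, hDsymm, hDtri⟩, hline, hXd, hnear⟩ := hLF n hn0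
  set δ : ℝ := 1 / (n:ℝ) with hδ
  have hδ0 : 0 < δ := by positivity
  have hA : 2*δ*(2+ε) ≤ ε*s := by
    have h1 : 2*(2+ε)*mR ≤ (n:ℝ)*ε := le_of_lt ((div_lt_iff₀ hε).mp hnA)
    have e1 : 2*δ*(2+ε) = (2*(2+ε))/(n:ℝ) := by rw [hδ]; ring
    have e2 : ε*s = ε/mR := by rw [hs]; ring
    rw [e1, e2, div_le_div_iff₀ hnR hmR0]
    nlinarith
  have hB : 2*mR*δ + 2*δ*(1+α) < α := by
    have h1 : 2*mR+2*(1+α) < (n:ℝ)*α := (div_lt_iff₀ hα).mp hnB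
    have e1 : 2*mR*δ + 2*δ*(1+α) = (2*mR + 2*(1+α))/(n:ℝ) := by rw [hδ]; ring
    rw [e1, div_lt_iff₀ hnR]
    nlinarith
  -- the points on the line
  set t : ℕ → ℝ := fun i => min ((i:ℝ)/mR) 1 with htdef
  have htmem : ∀ i, t i ∈ unitInterval := by
    intro i
    exact ⟨le_min (by positivity) zero_le_one, min_le_right _ _⟩
  set tI : ℕ → ↥unitInterval := fun i => ⟨t i, htmem i⟩ with htI
  have ht : ∀ i, i ≤ m → t i = (i:ℝ)/mR := by
    intro i hi
    refine min_eq_left ?_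
    rw [div_le_one hmR0, hmR]
    exact_mod_cast hi
  -- the points in X
  have hchoose : ∀ i : ℕ, ∃ a : X, D (Sum.inr (tI i)) (Sum.inl a) < δ := fun i => hnear (tI i)
  choose a ha using hchoose
  -- distance estimates
  have hub : ∀ i j, c * dist (a i) (a j) ≤ |t i - t j| + 2*δ := by
    intro i j
    have h1 := ha i
    have h2 := ha j
    have hsym : D (Sum.inl (a i)) (Sum.inr (tI i)) = D (Sum.inr (tI i)) (Sum.inl (a i)) :=
      hDsymm _ _
    have htr1 := hDtri (Sum.inl (a i)) (Sum.inr (tI i)) (Sum.inl (a j))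
    have htr2 := hDtri (Sum.inr (tI i)) (Sum.inr (tI j)) (Sum.inl (a j))
    have hl := hline (tI i) (tI j)
    rw [← hXd]
    simp only [htI] at hl
    linarith
  have hlb : ∀ i j, |t i - t j| - 2*δ ≤ c * dist (a i) (a j) := by
    intro i j
    have h1 := ha i
    have h2 := ha j
    have htr1 := hDtri (Sum.inr (tI i)) (Sum.inl (a i)) (Sum.inr (tI j))
    have htr2 := hDtri (Sum.inl (a i)) (Sum.inl (a j)) (Sum.inr (tI j))
    have hsym : D (Sum.inl (a j)) (Sum.inr (tI j)) = D (Sum.inr (tI j)) (Sum.inl (a j)) :=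
      hDsymm _ _
    have hl := hline (tI i) (tI j)
    have hx := hXd (a i) (a j)
    simp only [htI] at hl
    linarith
  have hcons : ∀ i, i + 1 < k → |t (i+1) - t i| = s := by
    intro i hi
    have hi1 : i + 1 ≤ m := by omega
    rw [ht (i+1) hi1, ht i (by omega)]
    push_cast
    rw [hs]
    have e : ((i:ℝ)+1)/mR - (i:ℝ)/mR = 1/mR := by ring
    rw [e, abs_of_nonneg (by positivity)]
  have hconsU : ∀ i, i + 1 < k → c * dist (a i) (a (i+1)) ≤ s + 2*δ := by
    intro i hi
    have := hub i (i+1)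
    rw [abs_sub_comm, hcons i hi] at this
    linarith
  have hconsL : ∀ i, i + 1 < k → s - 2*δ ≤ c * dist (a i) (a (i+1)) := by
    intro i hi
    have := hlb i (i+1)
    rw [abs_sub_comm, hcons i hi] at this
    linarith
  have ht0 : t 0 = 0 := by rw [ht 0 (by omega)]; simp
  have htm : t m = 1 := by rw [ht m le_rfl, hmR, div_self (by positivity)]
  have hend : 1 - 2*δ ≤ c * dist (a 0) (a m) := by
    have := hlb 0 m
    rw [ht0, htm] at this
    simp only [zero_sub, abs_neg, abs_one] at this
    linarith
  -- SRA hypothesis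
  have hhyp : ∀ i, i + 1 < k → ∀ j, j + 1 < k →
      dist (a i) (a (i+1)) ≤ (1+ε) * dist (a j) (a (j+1)) := by
    intro i hi j hj
    have h1 := hconsU i hi
    have h2 := hconsL j hj
    have h3 : (1+ε) * (s - 2*δ) ≤ (1+ε) * (c * dist (a j) (a (j+1))) :=
      mul_le_mul_of_nonneg_left h2 (by linarith)
    have h4 : c * dist (a i) (a (i+1)) ≤ c * ((1+ε) * dist (a j) (a (j+1))) := by
      have e : c * ((1+ε) * dist (a j) (a (j+1))) = (1+ε) * (c * dist (a j) (a (j+1))) := by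
        ring
      nlinarith
    exact le_of_mul_le_mul_left h4 hc
  have hsra := hSRA a hhyp
  have hsum : c * ∑ i ∈ Finset.range (k-1), dist (a i) (a (i+1)) ≤ 1 + 2*mR*δ := by
    rw [Finset.mul_sum]
    have hbound : ∑ i ∈ Finset.range (k-1), c * dist (a i) (a (i+1)) ≤
        ∑ _i ∈ Finset.range (k-1), (s + 2*δ) := by
      refine Finset.sum_le_sum ?_
      intro i hi
      rw [Finset.mem_range] at hi
      exact hconsU i (by omega)
    have hms : mR * s = 1 := by rw [hs]; field_simp
    have hcard : ∑ _i ∈ Finset.range (k-1), (s + 2*δ) = mR * (s + 2*δ) := by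
      rw [Finset.sum_const, Finset.card_range, nsmul_eq_mul, hmR, hm]
    have : mR * (s + 2*δ) = 1 + 2*mR*δ := by
      rw [mul_add, hms]; ring
    linarith
  have hkm : k - 1 = m := hm
  rw [hkm] at hsra
  have h5 : (1+α)*(1 - 2*δ) ≤ (1+α)*(c * dist (a 0) (a m)) :=
    mul_le_mul_of_nonneg_left hend (by linarith)
  have h6 : c * ((1+α)*dist (a 0) (a m)) ≤ c * ∑ i ∈ Finset.range (k-1), dist (a i) (a (i+1)) :=
    mul_le_mul_of_nonneg_left hsra hc.le
  have e5 : (1+α)*(1 - 2*δ) = 1 + α - 2*δ - 2*α*δ := by ring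
  have e6 : c * ((1+α)*dist (a 0) (a m)) = (1+α)*(c * dist (a 0) (a m)) := by ring
  nlinarith [hB, h5, h6, hsum]
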